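/- For λ_1 ≥ 0 and λ_{123'} ≥ 0, the vector λ_1·e_1 + λ_{123'}·e_{123'} ∈ ℝ^7 is an entropy vector of three finite-alphabet random variables if and only if λ_{123'} = log₂ m for some positive integer m. -/

import Mathlib

open Finset

/-- Probability that the discrete random variable `X` (on finite sample space `Fin N`
with probability mass function `p`) takes the value `a`. -/
noncomputable def pr {N : ℕ} (p : Fin N → ℝ) {A : Type} [DecidableEq A]
    (X : Fin N → A) (a : A) : ℝ :=
  ∑ ω, if X ω = a then p ω else 0

/-- Base-2 Shannon entropy of the random variable `X` under the pmf `p`. -/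
noncomputable def ent {N : ℕ} (p : Fin N → ℝ) {A : Type} [Fintype A] [DecidableEq A]
    (X : Fin N → A) : ℝ :=
  -∑ a, pr p X a * Real.logb 2 (pr p X a)

/-- `p` is a probability mass function. -/
def IsDist {N : ℕ} (p : Fin N → ℝ) : Prop :=
  (∀ ω, 0 ≤ p ω) ∧ ∑ ω, p ω = 1

/-- The entropy vector of three finite-alphabet random variables, with components
(H(X₁), H(X₂), H(X₃), H(X₁X₂), H(X₁X₃), H(X₂X₃), H(X₁X₂X₃)). -/
noncomputable def entVec3 {N a₁ a₂ a₃ : ℕ} (p : Fin N → ℝ)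
    (X₁ : Fin N → Fin a₁) (X₂ : Fin N → Fin a₂) (X₃ : Fin N → Fin a₃) : Fin 7 → ℝ :=
  ![ent p X₁, ent p X₂, ent p X₃,
    ent p (fun ω => (X₁ ω, X₂ ω)),
    ent p (fun ω => (X₁ ω, X₃ ω)),
    ent p (fun ω => (X₂ ω, X₃ ω)),
    ent p (fun ω => (X₁ ω, X₂ ω, X₃ ω))]

/-- `h ∈ ℝ⁷` is the entropy vector of some triple of finite-alphabet random variables. -/
def IsEntropic (h : Fin 7 → ℝ) : Prop :=
  ∃ (N a₁ a₂ a₃ : ℕ) (p : Fin N → ℝ)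
    (X₁ : Fin N → Fin a₁) (X₂ : Fin N → Fin a₂) (X₃ : Fin N → Fin a₃),
    IsDist p ∧ entVec3 p X₁ X₂ X₃ = h

noncomputable def e1 : Fin 7 → ℝ := ![1,0,0,1,1,0,1]
noncomputable def e2 : Fin 7 → ℝ := ![0,1,0,1,0,1,1]
noncomputable def e3 : Fin 7 → ℝ := ![0,0,1,0,1,1,1]
noncomputable def e12 : Fin 7 → ℝ := ![1,1,0,1,1,1,1]
noncomputable def e13 : Fin 7 → ℝ := ![1,0,1,1,1,1,1]
noncomputable def e23 : Fin 7 → ℝ := ![0,1,1,1,1,1,1]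
noncomputable def e123 : Fin 7 → ℝ := ![1,1,1,1,1,1,1]
noncomputable def e123' : Fin 7 → ℝ := ![1,1,1,2,2,2,2]



section Aux
set_option linter.unusedSectionVars false

section lemmas
variable {N : ℕ} {p : Fin N → ℝ} {A B C : Type} [Fintype A] [DecidableEq A]
  [Fintype B] [DecidableEq B] [Fintype C] [DecidableEq C]

lemma pr_nonneg (hp : IsDist p) (X : Fin N → A) (a : A) : 0 ≤ pr p X a :=
  Finset.sum_nonneg fun ω _ => by by_cases h : X ω = a <;> simp [h, hp.1 ω]

lemma sum_pr (hp : IsDist p) (X : Fin N → A) : ∑ a, pr p X a = 1 := by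
  unfold pr; rw [Finset.sum_comm, ← hp.2]
  exact Finset.sum_congr rfl fun ω _ => by simp

lemma marg_fst (X : Fin N → A) (Y : Fin N → B) (a : A) :
    ∑ b, pr p (fun ω => (X ω, Y ω)) (a, b) = pr p X a := by
  unfold pr; rw [Finset.sum_comm]
  refine Finset.sum_congr rfl fun ω _ => ?_
  have h : ∀ b : B, (if (X ω, Y ω) = (a, b) then p ω else 0) =
      (if Y ω = b then (if X ω = a then p ω else 0) else 0) := by
    intro b
    by_cases h1 : X ω = a <;> by_cases h2 : Y ω = b <;> simp [Prod.ext_iff, *]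
  rw [Finset.sum_congr rfl fun b _ => h b]
  simp

lemma marg_snd (X : Fin N → A) (Y : Fin N → B) (b : B) :
    ∑ a, pr p (fun ω => (X ω, Y ω)) (a, b) = pr p Y b := by
  unfold pr; rw [Finset.sum_comm]
  refine Finset.sum_congr rfl fun ω _ => ?_
  have h : ∀ a : A, (if (X ω, Y ω) = (a, b) then p ω else 0) =
      (if X ω = a then (if Y ω = b then p ω else 0) else 0) := by
    intro a
    by_cases h1 : X ω = a <;> by_cases h2 : Y ω = b <;> simp [Prod.ext_iff, *]
  rw [Finset.sum_congr rfl fun a _ => h a]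
  simp

lemma marg3_mid (X : Fin N → A) (Y : Fin N → B) (Z : Fin N → C) (a : A) (c : C) :
    ∑ b, pr p (fun ω => (X ω, Y ω, Z ω)) (a, b, c) = pr p (fun ω => (X ω, Z ω)) (a, c) := by
  unfold pr; rw [Finset.sum_comm]
  refine Finset.sum_congr rfl fun ω _ => ?_
  have h : ∀ b : B, (if (X ω, Y ω, Z ω) = (a, b, c) then p ω else 0) =
      (if Y ω = b then (if (X ω, Z ω) = (a, c) then p ω else 0) else 0) := by
    intro b
    by_cases h1 : X ω = a <;> by_cases h2 : Y ω = b <;> by_cases h3 : Z ω = c <;>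
      simp [Prod.ext_iff, *]
  rw [Finset.sum_congr rfl fun b _ => h b]
  simp

lemma marg3_last (X : Fin N → A) (Y : Fin N → B) (Z : Fin N → C) (a : A) (b : B) :
    ∑ c, pr p (fun ω => (X ω, Y ω, Z ω)) (a, b, c) = pr p (fun ω => (X ω, Y ω)) (a, b) := by
  unfold pr; rw [Finset.sum_comm]
  refine Finset.sum_congr rfl fun ω _ => ?_
  have h : ∀ c : C, (if (X ω, Y ω, Z ω) = (a, b, c) then p ω else 0) =
      (if Z ω = c then (if (X ω, Y ω) = (a, b) then p ω else 0) else 0) := by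
    intro c
    by_cases h1 : X ω = a <;> by_cases h2 : Y ω = b <;> by_cases h3 : Z ω = c <;>
      simp [Prod.ext_iff, *]
  rw [Finset.sum_congr rfl fun c _ => h c]
  simp

lemma marg3_fst (X : Fin N → A) (Y : Fin N → B) (Z : Fin N → C) (b : B) (c : C) :
    ∑ a, pr p (fun ω => (X ω, Y ω, Z ω)) (a, b, c) = pr p (fun ω => (Y ω, Z ω)) (b, c) := by
  unfold pr; rw [Finset.sum_comm]
  refine Finset.sum_congr rfl fun ω _ => ?_
  have h : ∀ a : A, (if (X ω, Y ω, Z ω) = (a, b, c) then p ω else 0) =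
      (if X ω = a then (if (Y ω, Z ω) = (b, c) then p ω else 0) else 0) := by
    intro a
    by_cases h1 : X ω = a <;> by_cases h2 : Y ω = b <;> by_cases h3 : Z ω = c <;>
      simp [Prod.ext_iff, *]
  rw [Finset.sum_congr rfl fun a _ => h a]
  simp

end lemmas

lemma gibbs {ι : Type} [Fintype ι] (f g : ι → ℝ) (hf : ∀ i, 0 ≤ f i) (hg : ∀ i, 0 ≤ g i)
    (hfs : ∑ i, f i = 1) (hgs : ∑ i, g i = 1)
    (hzero : ∀ i, g i = 0 → f i = 0)
    (hent : ∑ i, f i * Real.logb 2 (f i) = ∑ i, f i * Real.logb 2 (g i)) :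
    f = g := by
  set t : ι → ℝ := fun i => f i * (Real.log (g i) - Real.log (f i)) with ht
  have hts : ∑ i, t i = 0 := by
    have key : ∀ i, t i = (f i * Real.logb 2 (g i) - f i * Real.logb 2 (f i)) * Real.log 2 := by
      intro i
      have h2 : Real.log 2 ≠ 0 := ne_of_gt (Real.log_pos (by norm_num))
      simp only [ht, Real.logb]
      field_simp
    rw [Finset.sum_congr rfl fun i _ => key i, ← Finset.sum_mul, Finset.sum_sub_distrib,
      ← hent]
    simp
  have hle : ∀ i, f i ≠ g i → t i < g i - f i := by
    intro i hne
    rcases eq_or_lt_of_le (hf i) with h0 | h0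
    · have hgi : 0 < g i := lt_of_le_of_ne (hg i) (fun h => hne (h0.symm.trans h))
      simp only [ht, ← h0]
      simpa using hgi
    · have hgi : 0 < g i := by
        rcases eq_or_lt_of_le (hg i) with h0' | h0'
        · exact absurd (hzero i h0'.symm) (by intro h; rw [h] at h0; exact lt_irrefl 0 h0)
        · exact h0'
      have hdiv : (0:ℝ) < g i / f i := div_pos hgi h0
      have hne1 : g i / f i ≠ 1 := by
        intro h
        exact hne ((div_eq_one_iff_eq (ne_of_gt h0)).1 h).symm
      have := Real.log_lt_sub_one_of_pos hdiv hne1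
      have hlog : Real.log (g i) - Real.log (f i) = Real.log (g i / f i) := by
        rw [Real.log_div (ne_of_gt hgi) (ne_of_gt h0)]
      rw [ht]
      simp only
      rw [hlog]
      calc f i * Real.log (g i / f i) < f i * (g i / f i - 1) := by
            exact (mul_lt_mul_iff_right₀ h0).2 this
        _ = g i - f i := by field_simp
  have hle' : ∀ i, t i ≤ g i - f i := by
    intro i
    by_cases hne : f i = g i
    · simp [ht, hne]
    · exact le_of_lt (hle i hne)
  have hsum0 : ∑ i, (g i - f i - t i) = 0 := by
    simp [Finset.sum_sub_distrib, hfs, hgs, hts]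
  have hall := (Finset.sum_eq_zero_iff_of_nonneg (fun i _ => by
    have := hle' i; linarith)).1 hsum0
  funext i
  by_contra hne
  have h1 := hle i hne
  have h2 := hall i (Finset.mem_univ i)
  linarith

lemma det3 {ι κ μ : Type} [Fintype ι] [Fintype κ] [Fintype μ]
    (F : ι → κ → μ → ℝ) (G : ι → μ → ℝ)
    (hF : ∀ i k l, 0 ≤ F i k l)
    (hG : ∀ i l, G i l = ∑ k, F i k l)
    (h : ∑ i, ∑ k, ∑ l, F i k l * Real.logb 2 (F i k l)
       = ∑ i, ∑ k, ∑ l, F i k l * Real.logb 2 (G i l)) :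
    ∀ i k l, F i k l = 0 ∨ F i k l = G i l := by
  have hFG : ∀ i k l, F i k l ≤ G i l := fun i k l => by
    rw [hG]; exact Finset.single_le_sum (fun k _ => hF i k l) (Finset.mem_univ k)
  have hnn : ∀ i k l, 0 ≤ F i k l * (Real.logb 2 (G i l) - Real.logb 2 (F i k l)) := by
    intro i k l
    rcases eq_or_lt_of_le (hF i k l) with h0 | h0
    · rw [← h0]; simp
    · have : Real.logb 2 (F i k l) ≤ Real.logb 2 (G i l) :=
        (Real.logb_le_logb (by norm_num) h0 (lt_of_lt_of_le h0 (hFG i k l))).2 (hFG i k l)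
      have := sub_nonneg.2 this
      positivity
  have hsum0 : ∑ i, ∑ k, ∑ l, F i k l * (Real.logb 2 (G i l) - Real.logb 2 (F i k l)) = 0 := by
    simp only [mul_sub, Finset.sum_sub_distrib]
    rw [← h]; ring
  have h1 := (Finset.sum_eq_zero_iff_of_nonneg (fun i _ =>
    Finset.sum_nonneg fun k _ => Finset.sum_nonneg fun l _ => hnn i k l)).1 hsum0
  intro i k l
  have h2 := (Finset.sum_eq_zero_iff_of_nonneg (fun k _ =>
    Finset.sum_nonneg fun l _ => hnn i k l)).1 (h1 i (Finset.mem_univ i))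
  have h3 := (Finset.sum_eq_zero_iff_of_nonneg (fun l _ => hnn i k l)).1
    (h2 k (Finset.mem_univ k))
  have h4 := h3 l (Finset.mem_univ l)
  rcases eq_or_lt_of_le (hF i k l) with h0 | h0
  · exact Or.inl h0.symm
  · right
    rcases eq_or_lt_of_le (hFG i k l) with he | hlt
    · exact he
    · exfalso
      have := Real.logb_lt_logb (b := 2) (by norm_num) h0 hlt
      have : 0 < F i k l * (Real.logb 2 (G i l) - Real.logb 2 (F i k l)) := by
        apply mul_pos h0; linarith
      linarith

section varsec
variable {N : ℕ} {p : Fin N → ℝ} {A B C : Type} [Fintype A] [DecidableEq A]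
  [Fintype B] [DecidableEq B] [Fintype C] [DecidableEq C]

lemma sum3 (f : A × B × C → ℝ) : ∑ x : A × B × C, f x = ∑ a, ∑ b, ∑ c, f (a, b, c) := by
  rw [Fintype.sum_prod_type]
  exact Finset.sum_congr rfl fun a _ => by rw [Fintype.sum_prod_type]

lemma det_mid (hp : IsDist p) (X : Fin N → A) (Y : Fin N → B) (Z : Fin N → C)
    (h : ent p (fun ω => (X ω, Y ω, Z ω)) = ent p (fun ω => (X ω, Z ω))) :
    ∀ a b c, pr p (fun ω => (X ω, Y ω, Z ω)) (a, b, c) = 0 ∨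
      pr p (fun ω => (X ω, Y ω, Z ω)) (a, b, c) = pr p (fun ω => (X ω, Z ω)) (a, c) := by
  refine det3 (fun a b c => pr p (fun ω => (X ω, Y ω, Z ω)) (a, b, c))
    (fun a c => pr p (fun ω => (X ω, Z ω)) (a, c))
    (fun a b c => pr_nonneg hp _ _) (fun a c => (marg3_mid X Y Z a c).symm) ?_
  have lhs : ∑ a, ∑ b, ∑ c, pr p (fun ω => (X ω, Y ω, Z ω)) (a, b, c) *
      Real.logb 2 (pr p (fun ω => (X ω, Y ω, Z ω)) (a, b, c))
      = -ent p (fun ω => (X ω, Y ω, Z ω)) := by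
    simp only [ent, neg_neg]
    exact (sum3 (fun x => pr p (fun ω => (X ω, Y ω, Z ω)) x *
      Real.logb 2 (pr p (fun ω => (X ω, Y ω, Z ω)) x))).symm
  have rhs : ∑ a, ∑ b, ∑ c, pr p (fun ω => (X ω, Y ω, Z ω)) (a, b, c) *
      Real.logb 2 (pr p (fun ω => (X ω, Z ω)) (a, c))
      = -ent p (fun ω => (X ω, Z ω)) := by
    have step : ∀ a : A, ∑ b, ∑ c, pr p (fun ω => (X ω, Y ω, Z ω)) (a, b, c) *
        Real.logb 2 (pr p (fun ω => (X ω, Z ω)) (a, c))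
        = ∑ c, pr p (fun ω => (X ω, Z ω)) (a, c) *
            Real.logb 2 (pr p (fun ω => (X ω, Z ω)) (a, c)) := by
      intro a
      rw [Finset.sum_comm]
      refine Finset.sum_congr rfl fun c _ => ?_
      rw [← Finset.sum_mul, marg3_mid X Y Z a c]
    rw [Finset.sum_congr rfl fun a _ => step a]
    simp only [ent, neg_neg]
    exact (Fintype.sum_prod_type (fun x : A × C => pr p (fun ω => (X ω, Z ω)) x *
      Real.logb 2 (pr p (fun ω => (X ω, Z ω)) x))).symm
  rw [lhs, rhs, h]

lemma det_last (hp : IsDist p) (X : Fin N → A) (Y : Fin N → B) (Z : Fin N → C)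
    (h : ent p (fun ω => (X ω, Y ω, Z ω)) = ent p (fun ω => (X ω, Y ω))) :
    ∀ a b c, pr p (fun ω => (X ω, Y ω, Z ω)) (a, b, c) = 0 ∨
      pr p (fun ω => (X ω, Y ω, Z ω)) (a, b, c) = pr p (fun ω => (X ω, Y ω)) (a, b) := by
  have main := det3 (ι := A) (κ := C) (μ := B)
    (fun a c b => pr p (fun ω => (X ω, Y ω, Z ω)) (a, b, c))
    (fun a b => pr p (fun ω => (X ω, Y ω)) (a, b))
    (fun a c b => pr_nonneg hp _ _) (fun a b => (marg3_last X Y Z a b).symm) ?_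
  · intro a b c
    exact main a c b
  have lhs : ∑ a, ∑ c, ∑ b, pr p (fun ω => (X ω, Y ω, Z ω)) (a, b, c) *
      Real.logb 2 (pr p (fun ω => (X ω, Y ω, Z ω)) (a, b, c))
      = -ent p (fun ω => (X ω, Y ω, Z ω)) := by
    simp only [ent, neg_neg]
    exact ((sum3 (fun x => pr p (fun ω => (X ω, Y ω, Z ω)) x *
      Real.logb 2 (pr p (fun ω => (X ω, Y ω, Z ω)) x))).trans
      (Finset.sum_congr rfl fun a _ => Finset.sum_comm)).symm
  have rhs : ∑ a, ∑ c, ∑ b, pr p (fun ω => (X ω, Y ω, Z ω)) (a, b, c) *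
      Real.logb 2 (pr p (fun ω => (X ω, Y ω)) (a, b)) = -ent p (fun ω => (X ω, Y ω)) := by
    have step : ∀ a : A, ∑ c, ∑ b, pr p (fun ω => (X ω, Y ω, Z ω)) (a, b, c) *
        Real.logb 2 (pr p (fun ω => (X ω, Y ω)) (a, b))
        = ∑ b, pr p (fun ω => (X ω, Y ω)) (a, b) *
            Real.logb 2 (pr p (fun ω => (X ω, Y ω)) (a, b)) := by
      intro a
      rw [Finset.sum_comm]
      refine Finset.sum_congr rfl fun b _ => ?_
      rw [← Finset.sum_mul, marg3_last X Y Z a b]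
    rw [Finset.sum_congr rfl fun a _ => step a]
    simp only [ent, neg_neg]
    exact (Fintype.sum_prod_type (fun x : A × B => pr p (fun ω => (X ω, Y ω)) x *
      Real.logb 2 (pr p (fun ω => (X ω, Y ω)) x))).symm
  rw [lhs, rhs, h]


lemma indep_of_ent (hp : IsDist p) (X : Fin N → A) (Y : Fin N → B)
    (h : ent p (fun ω => (X ω, Y ω)) = ent p X + ent p Y) :
    ∀ a b, pr p (fun ω => (X ω, Y ω)) (a, b) = pr p X a * pr p Y b := by
  set f : A × B → ℝ := fun ab => pr p (fun ω => (X ω, Y ω)) ab with hfdef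
  set g : A × B → ℝ := fun ab => pr p X ab.1 * pr p Y ab.2 with hgdef
  have hbound1 : ∀ a b, f (a, b) ≤ pr p X a := fun a b => by
    rw [← marg_fst X Y a]
    exact Finset.single_le_sum (fun b _ => pr_nonneg hp (fun ω => (X ω, Y ω)) (a, b))
      (Finset.mem_univ b)
  have hbound2 : ∀ a b, f (a, b) ≤ pr p Y b := fun a b => by
    rw [← marg_snd X Y b]
    exact Finset.single_le_sum (fun a _ => pr_nonneg hp (fun ω => (X ω, Y ω)) (a, b))
      (Finset.mem_univ a)
  have hf : ∀ ab, 0 ≤ f ab := fun ab => pr_nonneg hp (fun ω => (X ω, Y ω)) ab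
  have hg : ∀ ab, 0 ≤ g ab := fun ab => mul_nonneg (pr_nonneg hp _ _) (pr_nonneg hp _ _)
  have hfs : ∑ ab, f ab = 1 := sum_pr hp (fun ω => (X ω, Y ω))
  have hgs : ∑ ab, g ab = 1 := by
    rw [Fintype.sum_prod_type]
    have step : ∀ a : A, ∑ b, g (a, b) = pr p X a * ∑ b, pr p Y b := fun a => by
      rw [Finset.mul_sum]
    rw [Finset.sum_congr rfl fun a _ => step a, sum_pr hp Y]
    simpa using sum_pr hp X
  have hzero : ∀ ab, g ab = 0 → f ab = 0 := by
    rintro ⟨a, b⟩ hab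
    rcases mul_eq_zero.1 hab with h0 | h0
    · exact le_antisymm (h0 ▸ hbound1 a b) (hf _)
    · exact le_antisymm (h0 ▸ hbound2 a b) (hf _)
  have e1 : ∑ ab : A × B, f ab * Real.logb 2 (pr p X ab.1)
      = ∑ a, pr p X a * Real.logb 2 (pr p X a) := by
    rw [Fintype.sum_prod_type]
    refine Finset.sum_congr rfl fun a _ => ?_
    have : ∀ b : B, f (a, b) * Real.logb 2 (pr p X (a, b).1)
        = f (a, b) * Real.logb 2 (pr p X a) := fun b => rfl
    rw [Finset.sum_congr rfl fun b _ => this b, ← Finset.sum_mul, marg_fst X Y a]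
  have e2 : ∑ ab : A × B, f ab * Real.logb 2 (pr p Y ab.2)
      = ∑ b, pr p Y b * Real.logb 2 (pr p Y b) := by
    rw [Fintype.sum_prod_type_right]
    refine Finset.sum_congr rfl fun b _ => ?_
    have : ∀ a : A, f (a, b) * Real.logb 2 (pr p Y (a, b).2)
        = f (a, b) * Real.logb 2 (pr p Y b) := fun a => rfl
    rw [Finset.sum_congr rfl fun a _ => this a, ← Finset.sum_mul, marg_snd X Y b]
  have hterm : ∀ ab : A × B, f ab * Real.logb 2 (g ab)
      = f ab * Real.logb 2 (pr p X ab.1) + f ab * Real.logb 2 (pr p Y ab.2) := by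
    rintro ⟨a, b⟩
    by_cases hf0 : f (a, b) = 0
    · simp [hf0]
    · have hfpos : 0 < f (a, b) := lt_of_le_of_ne (hf _) (Ne.symm hf0)
      have hX : 0 < pr p X a := lt_of_lt_of_le hfpos (hbound1 a b)
      have hY : 0 < pr p Y b := lt_of_lt_of_le hfpos (hbound2 a b)
      rw [hgdef]
      simp only
      rw [Real.logb_mul (ne_of_gt hX) (ne_of_gt hY), mul_add]
  have hent : ∑ ab, f ab * Real.logb 2 (f ab) = ∑ ab, f ab * Real.logb 2 (g ab) := by
    rw [Finset.sum_congr rfl fun ab _ => hterm ab, Finset.sum_add_distrib, e1, e2]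
    have hXY : ∑ ab, f ab * Real.logb 2 (f ab) = -ent p (fun ω => (X ω, Y ω)) := by
      simp [ent, hfdef]
    have hXe : ∑ a, pr p X a * Real.logb 2 (pr p X a) = -ent p X := by simp [ent]
    have hYe : ∑ b, pr p Y b * Real.logb 2 (pr p Y b) = -ent p Y := by simp [ent]
    rw [hXY, hXe, hYe, h]
    ring
  intro a b
  exact congrFun (gibbs f g hf hg hfs hgs hzero hent) (a, b)

lemma forward_main (hp : IsDist p) (X₁ : Fin N → A) (X₂ : Fin N → B) (X₃ : Fin N → C)
    (hI12 : ent p (fun ω => (X₁ ω, X₂ ω)) = ent p X₁ + ent p X₂)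
    (hI13 : ent p (fun ω => (X₁ ω, X₃ ω)) = ent p X₁ + ent p X₃)
    (hI23 : ent p (fun ω => (X₂ ω, X₃ ω)) = ent p X₂ + ent p X₃)
    (hD2 : ent p (fun ω => (X₁ ω, X₂ ω, X₃ ω)) = ent p (fun ω => (X₁ ω, X₃ ω)))
    (hD3 : ent p (fun ω => (X₁ ω, X₂ ω, X₃ ω)) = ent p (fun ω => (X₁ ω, X₂ ω))) :
    ∃ m : ℕ, 0 < m ∧ ent p X₂ = Real.logb 2 (m : ℝ) := by
  classical
  have i12 := indep_of_ent hp X₁ X₂ hI12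
  have i13 := indep_of_ent hp X₁ X₃ hI13
  have i23 := indep_of_ent hp X₂ X₃ hI23
  have d2 := det_mid hp X₁ X₂ X₃ hD2
  have d3 := det_last hp X₁ X₂ X₃ hD3
  have key : ∀ b c, 0 < pr p X₂ b → 0 < pr p X₃ c → pr p X₂ b = pr p X₃ c := by
    intro b c hb hc
    have hpos : (0:ℝ) < ∑ a, pr p (fun ω => (X₁ ω, X₂ ω, X₃ ω)) (a, b, c) := by
      rw [marg3_fst X₁ X₂ X₃ b c, i23 b c]
      exact mul_pos hb hc
    have hex : ∃ a ∈ (univ : Finset A), (0:ℝ) < pr p (fun ω => (X₁ ω, X₂ ω, X₃ ω)) (a, b, c) := by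
      by_contra hcon
      push_neg at hcon
      have : ∑ a, pr p (fun ω => (X₁ ω, X₂ ω, X₃ ω)) (a, b, c) ≤ 0 :=
        Finset.sum_nonpos fun a ha => hcon a ha
      linarith
    obtain ⟨a, -, ha⟩ := hex
    rcases d2 a b c with h0 | h2
    · rw [h0] at ha; exact absurd ha (lt_irrefl 0)
    rcases d3 a b c with h0 | h3
    · rw [h0] at ha; exact absurd ha (lt_irrefl 0)
    have e : pr p X₁ a * pr p X₃ c = pr p X₁ a * pr p X₂ b := by
      rw [← i13 a c, ← i12 a b, ← h2, ← h3]
    have hpa : 0 < pr p X₁ a := by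
      rcases eq_or_lt_of_le (pr_nonneg hp X₁ a) with h | h
      · rw [h2, i13 a c, ← h] at ha; simp at ha
      · exact h
    exact (mul_left_cancel₀ (ne_of_gt hpa) e).symm
  -- support of X₂
  set supp : Finset B := Finset.filter (fun b => 0 < pr p X₂ b) univ with hsupp
  have hq0 : ∀ b ∉ supp, pr p X₂ b = 0 := by
    intro b hb
    rw [hsupp] at hb
    simp only [Finset.mem_filter, Finset.mem_univ, true_and, not_lt] at hb
    exact le_antisymm hb (pr_nonneg hp X₂ b)
  have hsum1 : ∑ b ∈ supp, pr p X₂ b = 1 := by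
    rw [← sum_pr hp X₂]
    exact Finset.sum_subset (Finset.filter_subset _ _) (fun b _ hb => hq0 b hb)
  -- a positive value of r
  have hexc : ∃ c ∈ (univ : Finset C), 0 < pr p X₃ c := by
    by_contra hcon
    push_neg at hcon
    have : ∑ c, pr p X₃ c ≤ 0 := Finset.sum_nonpos fun c hc => hcon c hc
    rw [sum_pr hp X₃] at this; linarith
  obtain ⟨c₀, -, hc₀⟩ := hexc
  set α := pr p X₃ c₀ with hα
  have hval : ∀ b ∈ supp, pr p X₂ b = α := by
    intro b hb
    rw [hsupp] at hb
    simp only [Finset.mem_filter, Finset.mem_univ, true_and] at hb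
    exact key b c₀ hb hc₀
  have hcard : (supp.card : ℝ) * α = 1 := by
    rw [← hsum1, Finset.sum_congr rfl hval, Finset.sum_const, nsmul_eq_mul]
  have hm : 0 < supp.card := by
    by_contra hcon
    push_neg at hcon
    have h0 : supp.card = 0 := Nat.le_zero.mp hcon
    rw [h0] at hcard
    norm_num at hcard
  refine ⟨supp.card, hm, ?_⟩
  have hαval : α = 1 / (supp.card : ℝ) := by
    field_simp at hcard ⊢
    linarith
  have hent2 : ent p X₂ = Real.logb 2 (supp.card : ℝ) := by
    rw [ent]
    have hzero' : ∀ b ∈ (univ : Finset B), b ∉ supp →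
        pr p X₂ b * Real.logb 2 (pr p X₂ b) = 0 := by
      intro b _ hb; rw [hq0 b hb]; simp
    rw [← Finset.sum_subset (Finset.filter_subset _ _) hzero']
    rw [Finset.sum_congr rfl fun b hb => by rw [hval b hb]]
    rw [Finset.sum_const, nsmul_eq_mul, hαval]
    have hcpos : (0:ℝ) < (supp.card : ℝ) := by exact_mod_cast hm
    rw [one_div, Real.logb_inv]
    field_simp
    rfl
  exact hent2

end varsec

lemma pr_reindex {M : Type} [Fintype M] {N : ℕ} (e : M ≃ Fin N)
    (P : M → ℝ) {A : Type} [DecidableEq A] (X' : M → A) (a : A) :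
    pr (fun ω => P (e.symm ω)) (fun ω => X' (e.symm ω)) a
      = ∑ v, if X' v = a then P v else 0 := by
  unfold pr
  exact (Fintype.sum_equiv e (fun v => if X' v = a then P v else 0)
    (fun ω => if X' (e.symm ω) = a then P (e.symm ω) else 0) (fun v => by simp)).symm

lemma ent_inj {M : Type} [Fintype M] [DecidableEq M] {N : ℕ} (e : M ≃ Fin N) (P : M → ℝ)
    {A : Type} [Fintype A] [DecidableEq A] (X' : M → A) (hX : Function.Injective X') :
    ent (fun ω => P (e.symm ω)) (fun ω => X' (e.symm ω))
      = -∑ v, P v * Real.logb 2 (P v) := by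
  rw [ent, neg_inj]
  have hpr : ∀ a, pr (fun ω => P (e.symm ω)) (fun ω => X' (e.symm ω)) a
      = ∑ v, if X' v = a then P v else 0 := fun a => pr_reindex e P X' a
  have hprv : ∀ v : M, pr (fun ω => P (e.symm ω)) (fun ω => X' (e.symm ω)) (X' v) = P v := by
    intro v
    rw [hpr]
    rw [Finset.sum_eq_single v (fun w _ hw => if_neg (fun h => hw (hX h))) (by simp)]
    simp
  have hpr0 : ∀ a, a ∉ Finset.image X' Finset.univ →
      pr (fun ω => P (e.symm ω)) (fun ω => X' (e.symm ω)) a = 0 := by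
    intro a ha
    rw [hpr]
    apply Finset.sum_eq_zero
    intro v _
    rw [if_neg]
    intro h
    exact ha (Finset.mem_image.2 ⟨v, Finset.mem_univ v, h⟩)
  rw [← Finset.sum_subset (Finset.subset_univ (Finset.image X' Finset.univ))
    (fun a _ ha => by rw [hpr0 a ha]; simp)]
  rw [Finset.sum_image (fun v _ w _ h => hX h)]
  exact Finset.sum_congr rfl fun v _ => by rw [hprv v]

lemma cell (x : ℝ) (hx : 0 ≤ x) (c : ℝ) (hc : 0 < c) :
    (x / c) * Real.logb 2 (x / c) = (x * Real.logb 2 x) / c - (x / c) * Real.logb 2 c := by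
  rcases eq_or_lt_of_le hx with h | h
  · rw [← h]; simp
  · rw [Real.logb_div (ne_of_gt h) (ne_of_gt hc)]
    ring

lemma exists_dist_entropy (l1 : ℝ) (h1 : 0 ≤ l1) :
    ∃ (K : ℕ) (q : Fin K → ℝ), 0 < K ∧ (∀ u, 0 ≤ q u) ∧ ∑ u, q u = 1 ∧
      -∑ u, q u * Real.logb 2 (q u) = l1 := by
  classical
  set k := ⌈l1⌉₊ with hk
  set K := 2 ^ k with hKdef
  have hKpos : 0 < K := Nat.pow_pos (by norm_num)
  haveI : NeZero K := NeZero.of_pos hKpos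
  have hKR : (0:ℝ) < (K:ℝ) := by exact_mod_cast hKpos
  set Q : ℝ → Fin K → ℝ := fun t u => t / K + if u = 0 then 1 - t else 0 with hQ
  set E : ℝ → ℝ := fun t => -∑ u, Q t u * Real.logb 2 (Q t u) with hE
  have hQcont : ∀ u, Continuous (fun t => Q t u) := by
    intro u
    by_cases h : u = 0 <;> simp only [hQ, h, if_pos, if_neg, ite_true, ite_false] <;> fun_prop
  have hcont : Continuous E := by
    apply Continuous.neg
    apply continuous_finset_sum
    intro u _
    have hml : Continuous (fun x : ℝ => x * Real.log x / Real.log 2) :=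
      Real.continuous_mul_log.div_const _
    have : (fun t => Q t u * Real.logb 2 (Q t u))
        = (fun x : ℝ => x * Real.log x / Real.log 2) ∘ (fun t => Q t u) := by
      funext t
      simp [Real.logb, mul_div_assoc]
    rw [this]
    exact hml.comp (hQcont u)
  have hE0 : E 0 = 0 := by
    rw [hE]
    simp only
    rw [neg_eq_zero]
    apply Finset.sum_eq_zero
    intro u _
    by_cases h : u = 0 <;> simp [hQ, h]
  have hE1 : E 1 = (k : ℝ) := by
    have hQ1 : ∀ u, Q 1 u = 1 / K := by
      intro u
      by_cases h : u = 0 <;> simp [hQ, h]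
    rw [hE]
    simp only
    rw [Finset.sum_congr rfl fun u _ => by rw [hQ1 u]]
    rw [Finset.sum_const, Finset.card_univ, Fintype.card_fin, nsmul_eq_mul]
    rw [one_div, Real.logb_inv]
    have hcast : (K:ℝ) = (2:ℝ) ^ k := by rw [hKdef]; push_cast; ring
    rw [hcast, Real.logb_pow]
    have h22 : Real.logb 2 2 = 1 := by simp
    rw [h22]
    have h2k : ((2:ℝ) ^ k) ≠ 0 := by positivity
    field_simp
  have hmem : l1 ∈ Set.Icc (E 0) (E 1) := by
    rw [hE0, hE1]
    exact ⟨h1, Nat.le_ceil l1⟩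
  obtain ⟨t, ht, hEt⟩ := intermediate_value_Icc (by norm_num : (0:ℝ) ≤ 1)
    hcont.continuousOn hmem
  refine ⟨K, Q t, hKpos, ?_, ?_, ?_⟩
  · intro u
    have h0 : 0 ≤ t / K := div_nonneg ht.1 (le_of_lt hKR)
    by_cases h : u = 0
    · simp only [hQ, h, ite_true]
      have : 0 ≤ 1 - t := by linarith [ht.2]
      linarith
    · simp [hQ, h, h0]
  · rw [hQ]
    simp only
    rw [Finset.sum_add_distrib, Finset.sum_const, Finset.card_univ, Fintype.card_fin,
      nsmul_eq_mul, Finset.sum_ite_eq' Finset.univ (0 : Fin K) (fun _ => 1 - t)]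
    simp only [Finset.mem_univ, if_true]
    field_simp
    ring
  · exact hEt

lemma construct (l1 : ℝ) (h1 : 0 ≤ l1) (m : ℕ) (hm : 0 < m) :
    ∃ (N a₁ a₂ a₃ : ℕ) (p : Fin N → ℝ) (X₁ : Fin N → Fin a₁) (X₂ : Fin N → Fin a₂)
      (X₃ : Fin N → Fin a₃), IsDist p ∧
      ent p X₁ = l1 + Real.logb 2 (m:ℝ) ∧
      ent p X₂ = Real.logb 2 (m:ℝ) ∧
      ent p X₃ = Real.logb 2 (m:ℝ) ∧
      ent p (fun ω => (X₁ ω, X₂ ω)) = l1 + 2 * Real.logb 2 (m:ℝ) ∧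
      ent p (fun ω => (X₁ ω, X₃ ω)) = l1 + 2 * Real.logb 2 (m:ℝ) ∧
      ent p (fun ω => (X₂ ω, X₃ ω)) = 2 * Real.logb 2 (m:ℝ) ∧
      ent p (fun ω => (X₁ ω, X₂ ω, X₃ ω)) = l1 + 2 * Real.logb 2 (m:ℝ) := by
  classical
  obtain ⟨K, q, hK, hq0, hq1, hqent⟩ := exists_dist_entropy l1 h1
  haveI : NeZero m := NeZero.of_pos hm
  have hmR : (0:ℝ) < (m:ℝ) := by exact_mod_cast hm
  have hmne : (m:ℝ) ≠ 0 := ne_of_gt hmR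
  have hc2 : (0:ℝ) < (m:ℝ) * m := by positivity
  have hlogc2 : Real.logb 2 ((m:ℝ) * m) = 2 * Real.logb 2 (m:ℝ) := by
    rw [Real.logb_mul hmne hmne]; ring
  set e : (Fin K × Fin m × Fin m) ≃ Fin (K * (m * m)) :=
    (Equiv.prodCongr (Equiv.refl (Fin K)) finProdFinEquiv).trans finProdFinEquiv with he
  set P : Fin K × Fin m × Fin m → ℝ := fun v => q v.1 / ((m:ℝ) * m) with hP
  set X1' : Fin K × Fin m × Fin m → Fin (K * m) :=
    fun v => finProdFinEquiv (v.1, v.2.1) with hX1'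
  set X2' : Fin K × Fin m × Fin m → Fin m := fun v => v.2.2 with hX2'
  set X3' : Fin K × Fin m × Fin m → Fin m := fun v => v.2.1 + v.2.2 with hX3'
  have hPnn : ∀ v, 0 ≤ P v := fun v => div_nonneg (hq0 v.1) (le_of_lt hc2)
  -- the main cell sum
  have hT : ∑ v : Fin K × Fin m × Fin m, P v * Real.logb 2 (P v)
      = -l1 - 2 * Real.logb 2 (m:ℝ) := by
    rw [sum3 (fun v => P v * Real.logb 2 (P v))]
    have step : ∀ u : Fin K, ∑ z : Fin m, ∑ y : Fin m,
        P (u, z, y) * Real.logb 2 (P (u, z, y))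
        = q u * Real.logb 2 (q u) - q u * (2 * Real.logb 2 (m:ℝ)) := by
      intro u
      have hv : ∀ z y : Fin m, P (u, z, y) * Real.logb 2 (P (u, z, y))
          = (q u * Real.logb 2 (q u)) / ((m:ℝ)*m) - (q u / ((m:ℝ)*m)) * (2 * Real.logb 2 (m:ℝ)) := by
        intro z y
        rw [hP]
        simp only
        rw [cell (q u) (hq0 u) ((m:ℝ)*m) hc2, hlogc2]
      rw [Finset.sum_congr rfl fun z _ => Finset.sum_congr rfl fun y _ => hv z y]
      rw [Finset.sum_const, Finset.sum_const, Finset.card_univ, Fintype.card_fin,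
        nsmul_eq_mul, nsmul_eq_mul]
      field_simp
    rw [Finset.sum_congr rfl fun u _ => step u, Finset.sum_sub_distrib, ← Finset.sum_mul,
      hq1]
    have : ∑ u, q u * Real.logb 2 (q u) = -l1 := by linarith [hqent]
    rw [this]
    ring
  refine ⟨K * (m * m), K * m, m, m, fun ω => P (e.symm ω),
    fun ω => X1' (e.symm ω), fun ω => X2' (e.symm ω), fun ω => X3' (e.symm ω),
    ⟨fun ω => hPnn _, ?_⟩, ?_, ?_, ?_, ?_, ?_, ?_, ?_⟩
  · -- sums to 1
    have : ∑ ω, P (e.symm ω) = ∑ v, P v :=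
      (Fintype.sum_equiv e P (fun ω => P (e.symm ω)) (fun v => by simp)).symm
    rw [this, sum3 P]
    have step : ∀ u : Fin K, ∑ z : Fin m, ∑ y : Fin m, P (u, z, y) = q u := by
      intro u
      rw [hP]
      simp only
      rw [Finset.sum_const, Finset.sum_const, Finset.card_univ, Fintype.card_fin,
        nsmul_eq_mul, nsmul_eq_mul]
      field_simp
    rw [Finset.sum_congr rfl fun u _ => step u, hq1]
  · -- ent X1
    have hpr1 : ∀ (u : Fin K) (z : Fin m),
        pr (fun ω => P (e.symm ω)) (fun ω => X1' (e.symm ω)) (finProdFinEquiv (u, z))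
          = q u / (m:ℝ) := by
      intro u z
      rw [pr_reindex e P X1' (finProdFinEquiv (u, z)),
        sum3 (fun v => if X1' v = finProdFinEquiv (u, z) then P v else 0)]
      have e1 : ∀ (u' : Fin K) (z' y' : Fin m),
          (if X1' (u', z', y') = finProdFinEquiv (u, z) then P (u', z', y') else 0)
          = (if u' = u ∧ z' = z then q u' / ((m:ℝ) * m) else 0) := by
        intro u' z' y'
        show (if finProdFinEquiv (u', z') = finProdFinEquiv (u, z)
            then q u' / ((m:ℝ) * m) else 0) = _
        refine if_congr ?_ rfl rfl
        rw [EmbeddingLike.apply_eq_iff_eq, Prod.mk.injEq]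
      rw [Finset.sum_congr rfl fun u' _ => Finset.sum_congr rfl fun z' _ =>
        Finset.sum_congr rfl fun y' _ => e1 u' z' y']
      have e3 : ∀ (u' : Fin K), (∑ z' : Fin m, ∑ _y' : Fin m,
          (if u' = u ∧ z' = z then q u' / ((m:ℝ) * m) else 0))
          = (if u' = u then (m:ℝ) * (q u' / ((m:ℝ) * m)) else 0) := by
        intro u'
        by_cases h : u' = u
        · subst h
          simp [Finset.sum_ite_eq']
        · simp [h]
      rw [Finset.sum_congr rfl fun u' _ => e3 u']
      rw [Finset.sum_ite_eq' Finset.univ u (fun u' => (m:ℝ) * (q u' / ((m:ℝ) * m)))]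
      simp only [Finset.mem_univ, if_true]
      field_simp
    have hre : ∑ a : Fin (K * m),
        pr (fun ω => P (e.symm ω)) (fun ω => X1' (e.symm ω)) a *
          Real.logb 2 (pr (fun ω => P (e.symm ω)) (fun ω => X1' (e.symm ω)) a)
        = ∑ v : Fin K × Fin m,
        pr (fun ω => P (e.symm ω)) (fun ω => X1' (e.symm ω)) (finProdFinEquiv v) *
          Real.logb 2 (pr (fun ω => P (e.symm ω)) (fun ω => X1' (e.symm ω)) (finProdFinEquiv v)) :=
      (Fintype.sum_equiv finProdFinEquiv _ _ (fun v => rfl)).symm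
    rw [ent, hre, Fintype.sum_prod_type]
    have step : ∀ u : Fin K, ∑ z : Fin m,
        pr (fun ω => P (e.symm ω)) (fun ω => X1' (e.symm ω)) (finProdFinEquiv (u, z)) *
          Real.logb 2 (pr (fun ω => P (e.symm ω)) (fun ω => X1' (e.symm ω)) (finProdFinEquiv (u, z)))
        = q u * Real.logb 2 (q u) - q u * Real.logb 2 (m:ℝ) := by
      intro u
      rw [Finset.sum_congr rfl fun z _ => by
        rw [hpr1 u z, cell (q u) (hq0 u) (m:ℝ) hmR]]
      rw [Finset.sum_const, Finset.card_univ, Fintype.card_fin, nsmul_eq_mul]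
      field_simp
    rw [Finset.sum_congr rfl fun u _ => step u, Finset.sum_sub_distrib, ← Finset.sum_mul, hq1]
    have : ∑ u, q u * Real.logb 2 (q u) = -l1 := by linarith [hqent]
    rw [this]
    ring
  · -- ent X2
    have hpr2 : ∀ y : Fin m,
        pr (fun ω => P (e.symm ω)) (fun ω => X2' (e.symm ω)) y = 1 / (m:ℝ) := by
      intro y
      rw [pr_reindex e P X2' y, sum3 (fun v => if X2' v = y then P v else 0)]
      have e1 : ∀ (u : Fin K) (z y' : Fin m),
          (if X2' (u, z, y') = y then P (u, z, y') else 0)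
          = (if y' = y then q u / ((m:ℝ) * m) else 0) := fun u z y' => rfl
      rw [Finset.sum_congr rfl fun u _ => Finset.sum_congr rfl fun z _ =>
        Finset.sum_congr rfl fun y' _ => e1 u z y']
      have e2 : ∀ (u : Fin K), (∑ z : Fin m, ∑ y' : Fin m,
          (if y' = y then q u / ((m:ℝ) * m) else 0)) = q u * (1 / (m:ℝ)) := by
        intro u
        simp [Finset.sum_ite_eq']
        field_simp
      rw [Finset.sum_congr rfl fun u _ => e2 u, ← Finset.sum_mul, hq1, one_mul]
    rw [ent, Finset.sum_congr rfl fun y (_ : y ∈ Finset.univ) => by rw [hpr2 y]]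
    rw [Finset.sum_const, Finset.card_univ, Fintype.card_fin, nsmul_eq_mul,
      one_div, Real.logb_inv]
    field_simp
  · -- ent X3
    have hpr3 : ∀ c : Fin m,
        pr (fun ω => P (e.symm ω)) (fun ω => X3' (e.symm ω)) c = 1 / (m:ℝ) := by
      intro c
      rw [pr_reindex e P X3' c, sum3 (fun v => if X3' v = c then P v else 0)]
      have e1 : ∀ (u : Fin K) (z y' : Fin m),
          (if X3' (u, z, y') = c then P (u, z, y') else 0)
          = (if y' = c - z then q u / ((m:ℝ) * m) else 0) := by
        intro u z y'
        show (if z + y' = c then q u / ((m:ℝ) * m) else 0) = _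
        exact if_congr eq_sub_iff_add_eq'.symm rfl rfl
      rw [Finset.sum_congr rfl fun u _ => Finset.sum_congr rfl fun z _ =>
        Finset.sum_congr rfl fun y' _ => e1 u z y']
      have e2 : ∀ (u : Fin K), (∑ z : Fin m, ∑ y' : Fin m,
          (if y' = c - z then q u / ((m:ℝ) * m) else 0)) = q u * (1 / (m:ℝ)) := by
        intro u
        simp [Finset.sum_ite_eq']
        field_simp
      rw [Finset.sum_congr rfl fun u _ => e2 u, ← Finset.sum_mul, hq1, one_mul]
    rw [ent, Finset.sum_congr rfl fun c (_ : c ∈ Finset.univ) => by rw [hpr3 c]]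
    rw [Finset.sum_const, Finset.card_univ, Fintype.card_fin, nsmul_eq_mul,
      one_div, Real.logb_inv]
    field_simp
  · -- ent X12
    have hinj : Function.Injective (fun v : Fin K × Fin m × Fin m => (X1' v, X2' v)) := by
      intro v w h
      simp only [hX1', hX2', Prod.mk.injEq, EmbeddingLike.apply_eq_iff_eq] at h
      obtain ⟨⟨h1, h2⟩, h3⟩ := h
      exact Prod.ext h1 (Prod.ext h2 h3)
    have := ent_inj e P (fun v => (X1' v, X2' v)) hinj
    rw [this, hT]
    ring
  · -- ent X13
    have hinj : Function.Injective (fun v : Fin K × Fin m × Fin m => (X1' v, X3' v)) := by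
      intro v w h
      simp only [hX1', hX3', Prod.mk.injEq, EmbeddingLike.apply_eq_iff_eq] at h
      obtain ⟨⟨h1, h2⟩, h3⟩ := h
      have hy : v.2.2 = w.2.2 := by
        have := h3
        rw [h2] at this
        exact add_left_cancel this
      exact Prod.ext h1 (Prod.ext h2 hy)
    have := ent_inj e P (fun v => (X1' v, X3' v)) hinj
    rw [this, hT]
    ring
  · -- ent X23
    have hpr23 : ∀ a : Fin m × Fin m,
        pr (fun ω => P (e.symm ω)) (fun ω => (X2' (e.symm ω), X3' (e.symm ω))) a
          = 1 / ((m:ℝ) * m) := by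
      rintro ⟨y, c⟩
      have h0 : pr (fun ω => P (e.symm ω)) (fun ω => (X2' (e.symm ω), X3' (e.symm ω))) (y, c)
          = ∑ v, if (X2' v, X3' v) = (y, c) then P v else 0 :=
        pr_reindex e P (fun v => (X2' v, X3' v)) (y, c)
      rw [h0, sum3 (fun v => if (X2' v, X3' v) = (y, c) then P v else 0)]
      have e1 : ∀ (u : Fin K) (z y' : Fin m),
          (if (X2' (u, z, y'), X3' (u, z, y')) = (y, c) then P (u, z, y') else 0)
          = (if z = c - y then (if y' = y then q u / ((m:ℝ) * m) else 0) else 0) := by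
        intro u z y'
        show (if ((y' : Fin m), z + y') = (y, c) then q u / ((m:ℝ) * m) else 0) = _
        by_cases h1 : y' = y
        · subst h1
          by_cases h2 : z = c - y'
          · simp [h2, sub_add_cancel]
          · simp [h2, Prod.ext_iff, ← eq_sub_iff_add_eq]
        · by_cases h2 : z = c - y <;> simp [h1, h2, Prod.ext_iff]
      rw [Finset.sum_congr rfl fun u _ => Finset.sum_congr rfl fun z _ =>
        Finset.sum_congr rfl fun y' _ => e1 u z y']
      have e2 : ∀ (u : Fin K), (∑ z : Fin m, ∑ y' : Fin m,
          (if z = c - y then (if y' = y then q u / ((m:ℝ) * m) else 0) else 0))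
          = q u * (1 / ((m:ℝ) * m)) := by
        intro u
        simp [Finset.sum_ite_eq']
        field_simp
      rw [Finset.sum_congr rfl fun u _ => e2 u, ← Finset.sum_mul, hq1, one_mul]
    rw [ent, Finset.sum_congr rfl fun a (_ : a ∈ Finset.univ) => by rw [hpr23 a]]
    rw [Finset.sum_const, Finset.card_univ, Fintype.card_prod, Fintype.card_fin,
      nsmul_eq_mul, one_div, Real.logb_inv]
    push_cast
    rw [hlogc2]
    field_simp
  · -- ent X123
    have hinj : Function.Injective
        (fun v : Fin K × Fin m × Fin m => (X1' v, X2' v, X3' v)) := by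
      intro v w h
      simp only [hX1', hX2', hX3', Prod.mk.injEq, EmbeddingLike.apply_eq_iff_eq] at h
      obtain ⟨⟨h1, h2⟩, h3, h4⟩ := h
      exact Prod.ext h1 (Prod.ext h2 h3)
    have := ent_inj e P (fun v => (X1' v, X2' v, X3' v)) hinj
    rw [this, hT]
    ring

end Aux

/-- λ₁·e₁ + λ₁₂₃'·e₁₂₃' is entropic iff λ₁₂₃' = log₂ m for some positive integer m. -/
theorem stmt4 (l1 l : ℝ) (h1 : 0 ≤ l1) (hl : 0 ≤ l) :
    IsEntropic (l1 • e1 + l • e123') ↔ ∃ m : ℕ, 0 < m ∧ l = Real.logb 2 (m : ℝ) := by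
  constructor
  · rintro ⟨N, a₁, a₂, a₃, p, X₁, X₂, X₃, hp, hvec⟩
    have c0 : ent p X₁ = l1 * 1 + l * 1 := congrFun hvec 0
    have c1 : ent p X₂ = l1 * 0 + l * 1 := congrFun hvec 1
    have c2 : ent p X₃ = l1 * 0 + l * 1 := congrFun hvec 2
    have c3 : ent p (fun ω => (X₁ ω, X₂ ω)) = l1 * 1 + l * 2 := congrFun hvec 3
    have c4 : ent p (fun ω => (X₁ ω, X₃ ω)) = l1 * 1 + l * 2 := congrFun hvec 4
    have c5 : ent p (fun ω => (X₂ ω, X₃ ω)) = l1 * 0 + l * 2 := congrFun hvec 5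
    have c6 : ent p (fun ω => (X₁ ω, X₂ ω, X₃ ω)) = l1 * 1 + l * 2 := congrFun hvec 6
    obtain ⟨m, hm, hent2⟩ := forward_main hp X₁ X₂ X₃
      (by linarith) (by linarith) (by linarith) (by linarith) (by linarith)
    exact ⟨m, hm, by linarith⟩
  · rintro ⟨m, hm, hlm⟩
    obtain ⟨N, a₁, a₂, a₃, p, X₁, X₂, X₃, hp, hc1, hc2, hc3, hc12, hc13, hc23, hc123⟩ :=
      construct l1 h1 m hm
    refine ⟨N, a₁, a₂, a₃, p, X₁, X₂, X₃, hp, ?_⟩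
    funext i
    fin_cases i
    · show ent p X₁ = l1 * 1 + l * 1
      rw [hc1, hlm]; ring
    · show ent p X₂ = l1 * 0 + l * 1
      rw [hc2, hlm]; ring
    · show ent p X₃ = l1 * 0 + l * 1
      rw [hc3, hlm]; ring
    · show ent p (fun ω => (X₁ ω, X₂ ω)) = l1 * 1 + l * 2
      rw [hc12, hlm]; ring
    · show ent p (fun ω => (X₁ ω, X₃ ω)) = l1 * 1 + l * 2
      rw [hc13, hlm]; ring
    · show ent p (fun ω => (X₂ ω, X₃ ω)) = l1 * 0 + l * 2
      rw [hc23, hlm]; ring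
    · show ent p (fun ω => (X₁ ω, X₂ ω, X₃ ω)) = l1 * 1 + l * 2
      rw [hc123, hlm]; ring
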